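/- (Corollary: characterization of model representations.) Let σ be a nonnegative Borel measure on ℝ with σ(ℝ) = 1, all power moments finite, and ∫|g|² dσ > 0 for every nonzero complex polynomial g, and let (r_n) be the orthonormal polynomials of σ (deg r_n = n, positive leading coefficients, ⟨r_n, r_m⟩_σ = δ_{n,m}) with three-term recurrence x·r_n = a_{n−1} r_{n−1} + b_n r_n + a_n r_{n+1}, a_n > 0, b_n ∈ ℝ. If T is a linear operator on complex polynomials satisfying conditions (ii) and (iii), then there exist real sequences (α_n), (β_n), (γ_n) with γ_n > 0, constants α > 0, β ∈ ℝ, and a linear operator A on finitely supported complex sequences with A e₀ = (1/α)(e₁ − β e₀) and A(J₃ e_n) = J₅ e_n for all n (where J₃ is built from (a_n, b_n) and J₅ from (α_n, β_n, γ_n)), such that T(r_n) = Σ_{m} (A e_n)(m) · r_m for all n ≥ 0; i.e., T is the model representation of the associated operator of a Jacobi-type pencil. -/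

import Mathlib

open Polynomial MeasureTheory

noncomputable section

/-- The standard basis of the space of finitely supported complex sequences. -/
def e (n : ℕ) : ℕ →₀ ℂ := Finsupp.single n 1

/-- The standard basis extended by zero to negative indices. -/
def eZ (n : ℤ) : ℕ →₀ ℂ := if n < 0 then 0 else e n.toNat

/-- Extension of a real sequence by zero to negative indices. -/
def extZ (a : ℕ → ℝ) (n : ℤ) : ℝ := if n < 0 then 0 else a n.toNat

/-- Extension of a sequence of polynomials by zero to negative indices. -/
def extP (p : ℕ → Polynomial ℂ) (n : ℤ) : Polynomial ℂ := if n < 0 then 0 else p n.toNat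

/-- The data of a Jacobi-type pencil `Θ = (J₃, J₅, α, β)`:
`a`, `b` are the entries of the Jacobi matrix `J₃` (`a n > 0`);
`al`, `be`, `ga` are the entries of the five-diagonal matrix `J₅` (`ga n > 0`);
`α > 0`, `β ∈ ℝ`. -/
structure JacobiPencil where
  a : ℕ → ℝ
  b : ℕ → ℝ
  al : ℕ → ℝ
  be : ℕ → ℝ
  ga : ℕ → ℝ
  α : ℝ
  β : ℝ
  ha : ∀ n, 0 < a n
  hga : ∀ n, 0 < ga n
  hα : 0 < α

/-- The `n`-th column `J₃ e_n = a_{n-1} e_{n-1} + b_n e_n + a_n e_{n+1}` of the Jacobi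
matrix (terms with negative indices omitted). -/
def J3col (Θ : JacobiPencil) (n : ℕ) : ℕ →₀ ℂ :=
  (extZ Θ.a ((n : ℤ) - 1) : ℂ) • eZ ((n : ℤ) - 1) + (Θ.b n : ℂ) • e n + (Θ.a n : ℂ) • e (n + 1)

/-- The `n`-th column
`J₅ e_n = γ_{n-2} e_{n-2} + β_{n-1} e_{n-1} + α_n e_n + β_n e_{n+1} + γ_n e_{n+2}`
of the five-diagonal matrix (terms with negative indices omitted). -/
def J5col (Θ : JacobiPencil) (n : ℕ) : ℕ →₀ ℂ :=
  (extZ Θ.ga ((n : ℤ) - 2) : ℂ) • eZ ((n : ℤ) - 2)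
    + (extZ Θ.be ((n : ℤ) - 1) : ℂ) • eZ ((n : ℤ) - 1)
    + (Θ.al n : ℂ) • e n + (Θ.be n : ℂ) • e (n + 1) + (Θ.ga n : ℂ) • e (n + 2)

/-- `A` is the associated operator of the Jacobi-type pencil `Θ`:
`A e₀ = (1/α)(e₁ - β e₀)` and `A (J₃ eₙ) = J₅ eₙ` for all `n`. -/
def IsAssociatedOperator (Θ : JacobiPencil) (A : Module.End ℂ (ℕ →₀ ℂ)) : Prop :=
  A (e 0) = ((Θ.α : ℂ))⁻¹ • (e 1 - (Θ.β : ℂ) • e 0) ∧ ∀ n : ℕ, A (J3col Θ n) = J5col Θ n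

/-- `p` is the family of polynomials associated to the Jacobi-type pencil `Θ`:
`p₀ = 1`, `p₁(λ) = αλ + β`, and for all `n ≥ 0`
`γ_n p_{n+2} = -γ_{n-2} p_{n-2} - (β_{n-1} - λ a_{n-1}) p_{n-1}
  - (α_n - λ b_n) p_n - (β_n - λ a_n) p_{n+1}`,
with `p_{-2} = p_{-1} = 0` and coefficients with negative indices set to zero. -/
def IsAssociatedPolynomials (Θ : JacobiPencil) (p : ℕ → Polynomial ℂ) : Prop :=
  p 0 = 1 ∧ p 1 = C (Θ.α : ℂ) * X + C (Θ.β : ℂ) ∧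
  ∀ n : ℕ, C (Θ.ga n : ℂ) * p (n + 2) =
      - C (extZ Θ.ga ((n : ℤ) - 2) : ℂ) * extP p ((n : ℤ) - 2)
      - (C (extZ Θ.be ((n : ℤ) - 1) : ℂ) - X * C (extZ Θ.a ((n : ℤ) - 1) : ℂ))
          * extP p ((n : ℤ) - 1)
      - (C (Θ.al n : ℂ) - X * C (Θ.b n : ℂ)) * p n
      - (C (Θ.be n : ℂ) - X * C (Θ.a n : ℂ)) * p (n + 1)

/-- The `l₂` inner product `Σ_{k≥0} f(k) conj(g(k))` of two finitely supported sequences. -/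
def ipl2 (f g : ℕ →₀ ℂ) : ℂ := ∑ k ∈ f.support ∪ g.support, f k * (starRingEnd ℂ) (g k)

/-- The inner product `⟨u, v⟩_σ = ∫ u(x) conj(v(x)) dσ(x)` of two complex polynomials. -/
def ipm (σ : Measure ℝ) (u v : Polynomial ℂ) : ℂ :=
  ∫ x, u.eval (x : ℂ) * (starRingEnd ℂ) (v.eval (x : ℂ)) ∂σ

/-- All power moments of `σ` are finite. -/
def HasFiniteMoments (σ : Measure ℝ) : Prop := ∀ k : ℕ, Integrable (fun x => x ^ k) σ

/-- `∫ |g|² dσ > 0` for every nonzero complex polynomial `g`. -/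
def PosOnPolys (σ : Measure ℝ) : Prop :=
  ∀ g : Polynomial ℂ, g ≠ 0 → 0 < ∫ x, ‖g.eval (x : ℂ)‖ ^ 2 ∂σ

/-- Condition (ii): for each `k`, `T x^k = ξ_{k,k+1} x^{k+1} + Σ_{j=0}^k ξ_{k,j} x^j`
with `ξ_{k,k+1} > 0` and all `ξ_{k,j}` real. -/
def CondII (T : Module.End ℂ (Polynomial ℂ)) : Prop :=
  ∀ k : ℕ, ∃ ξ : ℕ → ℝ, 0 < ξ (k + 1) ∧
    T (X ^ k) = ∑ j ∈ Finset.range (k + 2), C (ξ j : ℂ) * X ^ j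

/-- Condition (iii): `⟨T(x·u), v⟩_σ = ⟨u, T(x·v)⟩_σ` for all polynomials `u`, `v`,
i.e., the operator `T Λ₀` is symmetric. -/
def CondIII (σ : Measure ℝ) (T : Module.End ℂ (Polynomial ℂ)) : Prop :=
  ∀ u v : Polynomial ℂ, ipm σ (T (X * u)) v = ipm σ u (T (X * v))

/-! ### Auxiliary lemmas -/

section Aux

variable {σ : Measure ℝ}

lemma extZ_coe (a : ℕ → ℝ) (m : ℕ) : extZ a (m : ℤ) = a m := by simp [extZ]

lemma extP_coe (p : ℕ → Polynomial ℂ) (m : ℕ) : extP p (m : ℤ) = p m := by simp [extP]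

lemma eZ_coe (m : ℕ) : eZ (m : ℤ) = e m := by simp [eZ]

lemma cast_succ_sub_one (n : ℕ) : ((n + 1 : ℕ) : ℤ) - 1 = (n : ℤ) := by push_cast; ring

lemma e_apply (k m : ℕ) : (e k) m = if k = m then 1 else 0 := Finsupp.single_apply

lemma eZ_apply (k : ℤ) (m : ℕ) : (eZ k) m = if k = (m : ℤ) then 1 else 0 := by
  unfold eZ
  split
  · rw [if_neg (by omega)]; rfl
  · rw [e, Finsupp.single_apply]
    exact if_congr (by omega) rfl rfl

lemma integrable_eval (hmom : HasFiniteMoments σ) (p : Polynomial ℂ) :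
    Integrable (fun x : ℝ => p.eval (x : ℂ)) σ := by
  induction p using Polynomial.induction_on' with
  | add p q hp hq => simp only [Polynomial.eval_add]; exact hp.add hq
  | monomial n c =>
      have : (fun x : ℝ => (Polynomial.monomial n c).eval (x : ℂ))
          = fun x : ℝ => c * ((x ^ n : ℝ) : ℂ) := by
        funext x; simp [Polynomial.eval_monomial]
      rw [this]
      exact ((hmom n).ofReal.const_mul c)

lemma conj_eval (p : Polynomial ℂ) (x : ℝ) :
    (starRingEnd ℂ) (p.eval (x : ℂ)) = (p.map (starRingEnd ℂ)).eval (x : ℂ) := by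
  rw [Polynomial.eval_map]
  conv_rhs => rw [← Complex.conj_ofReal x, Polynomial.eval₂_at_apply]

lemma ipm_eq_integral (u v : Polynomial ℂ) :
    ipm σ u v = ∫ x, (u * v.map (starRingEnd ℂ)).eval (x : ℂ) ∂σ := by
  unfold ipm
  congr 1; funext x; rw [conj_eval]; simp

lemma ipm_add_left (hmom : HasFiniteMoments σ) (u w v : Polynomial ℂ) :
    ipm σ (u + w) v = ipm σ u v + ipm σ w v := by
  simp only [ipm_eq_integral, add_mul, Polynomial.eval_add]
  exact integral_add (integrable_eval hmom _) (integrable_eval hmom _)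

lemma ipm_Cmul_left (c : ℂ) (u v : Polynomial ℂ) :
    ipm σ (Polynomial.C c * u) v = c * ipm σ u v := by
  simp only [ipm_eq_integral, mul_assoc, Polynomial.eval_mul, Polynomial.eval_C]
  exact integral_const_mul c _

lemma ipm_zero_left (v : Polynomial ℂ) : ipm σ 0 v = 0 := by
  simp [ipm_eq_integral]

lemma ipm_conj_symm (u v : Polynomial ℂ) :
    ipm σ u v = (starRingEnd ℂ) (ipm σ v u) := by
  unfold ipm
  rw [← integral_conj]
  congr 1; funext x; simp [mul_comm]

lemma ipm_sum_left (hmom : HasFiniteMoments σ) {ι : Type*} (s : Finset ι)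
    (f : ι → Polynomial ℂ) (v : Polynomial ℂ) :
    ipm σ (∑ i ∈ s, f i) v = ∑ i ∈ s, ipm σ (f i) v := by
  classical
  induction s using Finset.induction_on with
  | empty => simp [ipm_zero_left]
  | insert _ _ hni ih =>
      rw [Finset.sum_insert hni, ipm_add_left hmom, ih, Finset.sum_insert hni]

/-- Self-conjugate (i.e. real) polynomials. -/
def SelfConj (p : Polynomial ℂ) : Prop := p.map (starRingEnd ℂ) = p

lemma SelfConj.add {p q : Polynomial ℂ} (hp : SelfConj p) (hq : SelfConj q) :
    SelfConj (p + q) := by unfold SelfConj at *; rw [Polynomial.map_add, hp, hq]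

lemma SelfConj.mul {p q : Polynomial ℂ} (hp : SelfConj p) (hq : SelfConj q) :
    SelfConj (p * q) := by unfold SelfConj at *; rw [Polynomial.map_mul, hp, hq]

lemma SelfConj.sub {p q : Polynomial ℂ} (hp : SelfConj p) (hq : SelfConj q) :
    SelfConj (p - q) := by unfold SelfConj at *; rw [Polynomial.map_sub, hp, hq]

lemma selfConj_C_real (c : ℝ) : SelfConj (C (c : ℂ)) := by
  unfold SelfConj; rw [Polynomial.map_C]; simp [Complex.conj_ofReal]

lemma selfConj_C {c : ℂ} (hc : c.im = 0) : SelfConj (C c) := by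
  unfold SelfConj; rw [Polynomial.map_C]; congr 1
  exact Complex.conj_eq_iff_im.2 hc

lemma selfConj_X : SelfConj (X : Polynomial ℂ) := by
  unfold SelfConj; simp

lemma selfConj_zero : SelfConj (0 : Polynomial ℂ) := by unfold SelfConj; simp

lemma SelfConj.coeff_im {p : Polynomial ℂ} (hp : SelfConj p) (k : ℕ) :
    (p.coeff k).im = 0 := by
  have := congrArg (fun q => Polynomial.coeff q k) hp
  simp only [Polynomial.coeff_map] at this
  exact Complex.conj_eq_iff_im.1 this

lemma SelfConj.sum {ι : Type*} {s : Finset ι} {f : ι → Polynomial ℂ}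
    (h : ∀ i ∈ s, SelfConj (f i)) : SelfConj (∑ i ∈ s, f i) := by
  unfold SelfConj at *
  rw [Polynomial.map_sum]
  exact Finset.sum_congr rfl h

lemma selfConj_smul {c : ℂ} (hc : c.im = 0) {p : Polynomial ℂ} (hp : SelfConj p) :
    SelfConj (c • p) := by
  rw [Polynomial.smul_eq_C_mul]; exact (selfConj_C hc).mul hp

lemma T_selfConj {T : Module.End ℂ (Polynomial ℂ)} (hII : CondII T)
    {p : Polynomial ℂ} (hp : SelfConj p) : SelfConj (T p) := by
  have hrep : T p = ∑ i ∈ p.support, T (Polynomial.monomial i (p.coeff i)) := by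
    conv_lhs => rw [Polynomial.as_sum_support p]
    rw [map_sum]
  rw [hrep]
  refine SelfConj.sum fun i _ => ?_
  rw [← Polynomial.smul_X_eq_monomial, T.map_smul]
  refine selfConj_smul (hp.coeff_im i) ?_
  obtain ⟨ξ, -, hξ⟩ := hII i
  rw [hξ]
  exact SelfConj.sum fun j _ => (selfConj_C_real (ξ j)).mul (by
    unfold SelfConj; simp)

lemma ipm_real {u v : Polynomial ℂ} (hu : SelfConj u) (hv : SelfConj v) :
    (starRingEnd ℂ) (ipm σ u v) = ipm σ u v := by
  have hre : ∀ (p : Polynomial ℂ), SelfConj p → ∀ x : ℝ,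
      (starRingEnd ℂ) (p.eval (x : ℂ)) = p.eval (x : ℂ) := by
    intro p hp x; rw [conj_eval, hp]
  unfold ipm
  simp_rw [hre v hv]
  rw [← integral_conj]
  congr 1; funext x
  rw [map_mul, hre u hu, hre v hv]

lemma natDegree_TXpow {T : Module.End ℂ (Polynomial ℂ)} (hII : CondII T) (k : ℕ) :
    (T (X ^ k)).natDegree ≤ k + 1 := by
  obtain ⟨ξ, -, hξ⟩ := hII k
  rw [hξ]
  refine Polynomial.natDegree_sum_le_of_forall_le _ _ fun j hj => ?_
  calc (C (ξ j : ℂ) * X ^ j).natDegree ≤ j :=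
        (Polynomial.natDegree_C_mul_le _ _).trans (by simp)
    _ ≤ k + 1 := by simp only [Finset.mem_range] at hj; omega

lemma natDegree_T_le {T : Module.End ℂ (Polynomial ℂ)} (hII : CondII T)
    {p : Polynomial ℂ} {d : ℕ} (hp : p.natDegree ≤ d) : (T p).natDegree ≤ d + 1 := by
  conv_lhs => rw [Polynomial.as_sum_range' p (d + 1) (Nat.lt_succ_of_le hp)]
  rw [map_sum]
  refine Polynomial.natDegree_sum_le_of_forall_le _ _ fun k hk => ?_
  rw [← Polynomial.smul_X_eq_monomial, T.map_smul]
  calc (p.coeff k • T (X ^ k)).natDegree ≤ (T (X ^ k)).natDegree :=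
        Polynomial.natDegree_smul_le _ _
    _ ≤ k + 1 := natDegree_TXpow hII k
    _ ≤ d + 1 := by simp only [Finset.mem_range] at hk; omega

lemma exists_xi {T : Module.End ℂ (Polynomial ℂ)} (hII : CondII T) (d : ℕ) :
    ∃ ξ : ℝ, 0 < ξ ∧ ∀ p : Polynomial ℂ, p.natDegree ≤ d →
      (T p).coeff (d + 1) = (ξ : ℂ) * p.coeff d := by
  obtain ⟨ξf, hpos, heq⟩ := hII d
  refine ⟨ξf (d + 1), hpos, fun p hp => ?_⟩
  conv_lhs => rw [Polynomial.as_sum_range' p (d + 1) (Nat.lt_succ_of_le hp), map_sum]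
  rw [Polynomial.finset_sum_coeff]
  rw [Finset.sum_eq_single d]
  · rw [← Polynomial.smul_X_eq_monomial, T.map_smul, Polynomial.coeff_smul, heq,
      Polynomial.finset_sum_coeff]
    rw [Finset.sum_eq_single (d + 1)]
    · rw [Polynomial.coeff_C_mul, Polynomial.coeff_X_pow, if_pos rfl, mul_one, smul_eq_mul,
        mul_comm]
    · intro j hj hne
      rw [Polynomial.coeff_C_mul, Polynomial.coeff_X_pow, if_neg (fun h => hne h.symm), mul_zero]
    · intro h; exact absurd (Finset.self_mem_range_succ (d + 1)) h
  · intro k hk hne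
    rw [← Polynomial.smul_X_eq_monomial, T.map_smul, Polynomial.coeff_smul]
    have hk' : k + 1 < d + 1 := by
      simp only [Finset.mem_range] at hk; omega
    rw [Polynomial.coeff_eq_zero_of_natDegree_lt (lt_of_le_of_lt (natDegree_TXpow hII k) hk'),
      smul_zero]
  · intro h; exact absurd (by simp : d ∈ Finset.range (d + 1)) h

lemma expansion (r : ℕ → Polynomial ℂ)
    (hdeg : ∀ n : ℕ, (r n).degree = n)
    (hlead : ∀ n : ℕ, 0 < ((r n).leadingCoeff).re ∧ ((r n).leadingCoeff).im = 0) :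
    ∀ (N : ℕ) (p : Polynomial ℂ), p.natDegree ≤ N →
      ∃ c : ℕ → ℂ, p = ∑ m ∈ Finset.range (N + 1), C (c m) * r m := by
  have hnd : ∀ n, (r n).natDegree = n := fun n =>
    Polynomial.natDegree_eq_of_degree_eq_some (hdeg n)
  have hlc : ∀ n, (r n).coeff n ≠ 0 := by
    intro n h
    have := (hlead n).1
    rw [Polynomial.leadingCoeff, hnd n, h] at this
    simp at this
  intro N
  induction N with
  | zero =>
      intro p hp
      set l := (r 0).coeff 0 with hldef
      have hl : r 0 = C l := by
        have := Polynomial.eq_C_of_natDegree_le_zero (le_of_eq (hnd 0))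
        rw [this]
      refine ⟨fun _ => p.coeff 0 / l, ?_⟩
      rw [Finset.sum_range_one, hl, ← Polynomial.C_mul, div_mul_cancel₀ _ (hlc 0)]
      exact Polynomial.eq_C_of_natDegree_le_zero hp
  | succ N ih =>
      intro p hp
      set k := p.coeff (N + 1) / (r (N + 1)).coeff (N + 1) with hk
      have hq : (p - C k * r (N + 1)).natDegree ≤ N := by
        rw [Polynomial.natDegree_le_iff_coeff_eq_zero]
        intro m hm
        rw [Polynomial.coeff_sub, Polynomial.coeff_C_mul]
        rcases eq_or_lt_of_le (Nat.succ_le_of_lt hm) with h | h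
        · rw [← h, hk, div_mul_cancel₀ _ (hlc (N + 1)), sub_self]
        · rw [Polynomial.coeff_eq_zero_of_natDegree_lt (lt_of_le_of_lt hp h),
            Polynomial.coeff_eq_zero_of_natDegree_lt (by rw [hnd]; exact h), mul_zero,
            sub_zero]
      obtain ⟨c', hc'⟩ := ih _ hq
      refine ⟨Function.update c' (N + 1) k, ?_⟩
      rw [Finset.sum_range_succ, Function.update_self]
      have : ∑ m ∈ Finset.range (N + 1), C (Function.update c' (N + 1) k m) * r m
          = ∑ m ∈ Finset.range (N + 1), C (c' m) * r m := by
        refine Finset.sum_congr rfl fun m hm => ?_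
        rw [Function.update_of_ne (by simp only [Finset.mem_range] at hm; omega)]
      rw [this, ← hc']
      ring

lemma ipm_expansion (hmom : HasFiniteMoments σ) (r : ℕ → Polynomial ℂ)
    (horth : ∀ n m : ℕ, ipm σ (r n) (r m) = if n = m then 1 else 0)
    (M : ℕ) (c : ℕ → ℂ) (j : ℕ) :
    ipm σ (∑ m ∈ Finset.range M, C (c m) * r m) (r j)
      = if j < M then c j else 0 := by
  rw [ipm_sum_left hmom]
  have : ∀ m ∈ Finset.range M, ipm σ (C (c m) * r m) (r j)
      = if m = j then c m else 0 := by
    intro m _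
    rw [ipm_Cmul_left, horth]
    split <;> simp
  rw [Finset.sum_congr rfl this, Finset.sum_ite_eq' (Finset.range M) j c]
  simp [Finset.mem_range]

lemma J5_coord (Θ : JacobiPencil) (M : ℕ → ℕ → ℂ)
    (hal : ∀ n, (Θ.al n : ℂ) = M n n) (hbe : ∀ n, (Θ.be n : ℂ) = M n (n + 1))
    (hga : ∀ n, (Θ.ga n : ℂ) = M n (n + 2))
    (hsymm : ∀ n m, M n m = M m n) (h0 : ∀ n m, n + 3 ≤ m → M n m = 0) :
    ∀ n m, (J5col Θ n) m = M n m := by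
  intro n m
  unfold J5col
  simp only [Finsupp.add_apply, Finsupp.smul_apply, smul_eq_mul, e_apply, eZ_apply]
  by_cases h5 : m = n + 2
  · subst h5
    rw [if_neg (by omega), if_neg (by omega), if_neg (by omega), if_neg (by omega),
      if_pos (by omega)]
    simp only [mul_zero, mul_one, zero_add, add_zero]
    exact hga n
  · by_cases h4 : m = n + 1
    · subst h4
      rw [if_neg (by omega), if_neg (by omega), if_neg (by omega), if_pos (by omega),
        if_neg (by omega)]
      simp only [mul_zero, mul_one, zero_add, add_zero]
      exact hbe n
    · by_cases h3 : m = n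
      · subst h3
        rw [if_neg (by omega), if_neg (by omega), if_pos (by omega), if_neg (by omega),
          if_neg (by omega)]
        simp only [mul_zero, mul_one, zero_add, add_zero]
        exact hal m
      · by_cases h2 : n = m + 1
        · subst h2
          rw [if_neg (by omega), if_pos (by omega), if_neg (by omega), if_neg (by omega),
            if_neg (by omega)]
          simp only [mul_zero, mul_one, zero_add, add_zero]
          rw [cast_succ_sub_one, extZ_coe, hbe m, hsymm]
        · by_cases h1 : n = m + 2
          · subst h1
            rw [if_pos (by omega), if_neg (by omega), if_neg (by omega), if_neg (by omega),
              if_neg (by omega)]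
            simp only [mul_zero, mul_one, zero_add, add_zero]
            have hc : ((m + 2 : ℕ) : ℤ) - 2 = (m : ℤ) := by omega
            rw [hc, extZ_coe, hga m, hsymm]
          · rw [if_neg (by omega), if_neg (by omega), if_neg (by omega), if_neg (by omega),
              if_neg (by omega)]
            simp only [mul_zero, zero_add, add_zero]
            rcases Nat.lt_or_ge (n + 2) m with h | h
            · exact (h0 n m (by omega)).symm
            · rw [hsymm]
              exact (h0 m n (by omega)).symm

end Aux

/-- Characterization of model representations: an operator `T` on polynomials satisfying
conditions (ii) and (iii) is the model representation in `L²_σ` of the associated operator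
of a Jacobi-type pencil built on the Jacobi matrix of the orthonormal polynomials of `σ`. -/
theorem model_representation_characterization (σ : Measure ℝ) [IsProbabilityMeasure σ]
    (hmom : HasFiniteMoments σ) (hpos : PosOnPolys σ)
    (r : ℕ → Polynomial ℂ) (hdeg : ∀ n : ℕ, (r n).degree = n)
    (hlead : ∀ n : ℕ, 0 < ((r n).leadingCoeff).re ∧ ((r n).leadingCoeff).im = 0)
    (horth : ∀ n m : ℕ, ipm σ (r n) (r m) = if n = m then 1 else 0)
    (a b : ℕ → ℝ) (hapos : ∀ n, 0 < a n)
    (hrec : ∀ n : ℕ, X * r n =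
      C (extZ a ((n : ℤ) - 1) : ℂ) * extP r ((n : ℤ) - 1) + C (b n : ℂ) * r n
        + C (a n : ℂ) * r (n + 1))
    (T : Module.End ℂ (Polynomial ℂ)) (hII : CondII T) (hIII : CondIII σ T) :
    ∃ Θ : JacobiPencil, Θ.a = a ∧ Θ.b = b ∧
      ∃ A : Module.End ℂ (ℕ →₀ ℂ), IsAssociatedOperator Θ A ∧
        ∀ n : ℕ, T (r n) = (A (e n)).sum fun m c => c • r m := by
  classical
  have hnd : ∀ n, (r n).natDegree = n := fun n =>
    Polynomial.natDegree_eq_of_degree_eq_some (hdeg n)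
  have hlc : ∀ n, (r n).coeff n ≠ 0 := by
    intro n h
    have := (hlead n).1
    rw [Polynomial.leadingCoeff, hnd n, h] at this
    simp at this
  have hTC : ∀ (c : ℂ) (p : Polynomial ℂ), T (C c * p) = C c * T p := by
    intro c p
    rw [← Polynomial.smul_eq_C_mul, T.map_smul, Polynomial.smul_eq_C_mul]
  -- self-conjugacy of the r's
  have hrsc : ∀ n, SelfConj (r n) := by
    have hstep : ∀ n, SelfConj (r n) → SelfConj (extP r ((n : ℤ) - 1)) → SelfConj (r (n + 1)) := by
      intro n hn hprev
      have h := hrec n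
      have hane : ((a n : ℝ) : ℂ) ≠ 0 := by
        simp only [ne_eq, Complex.ofReal_eq_zero]
        exact ne_of_gt (hapos n)
      have hkey : C ((a n : ℝ) : ℂ) * r (n + 1) = X * r n
          - C (extZ a ((n : ℤ) - 1) : ℂ) * extP r ((n : ℤ) - 1) - C (b n : ℂ) * r n := by
        linear_combination -h
      have hr1 : r (n + 1) = C ((a n : ℂ))⁻¹ * (X * r n
          - C (extZ a ((n : ℤ) - 1) : ℂ) * extP r ((n : ℤ) - 1) - C (b n : ℂ) * r n) := by
        rw [← hkey, ← mul_assoc, ← Polynomial.C_mul, inv_mul_cancel₀ hane, Polynomial.C_1,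
          one_mul]
      rw [hr1]
      have h1 : SelfConj (C ((a n : ℂ))⁻¹) := by
        refine selfConj_C ?_
        simp [Complex.inv_im]
      exact h1.mul (((selfConj_X.mul hn).sub
        ((selfConj_C_real _).mul hprev)).sub ((selfConj_C_real _).mul hn))
    have h0 : SelfConj (r 0) := by
      have hr0 : r 0 = C ((r 0).coeff 0) := Polynomial.eq_C_of_natDegree_le_zero (le_of_eq (hnd 0))
      rw [hr0]
      refine selfConj_C ?_
      have := (hlead 0).2
      rwa [Polynomial.leadingCoeff, hnd 0] at this
    have hrsc2 : ∀ n, SelfConj (r n) ∧ SelfConj (r (n + 1)) := by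
      intro n
      induction n with
      | zero =>
          refine ⟨h0, hstep 0 h0 ?_⟩
          have hneg : ((0 : ℕ) : ℤ) - 1 = -1 := by norm_num
          rw [hneg]
          have : extP r (-1) = 0 := by norm_num [extP]
          rw [this]
          exact selfConj_zero
      | succ n ih =>
          exact ⟨ih.2, hstep (n + 1) ih.2 (by rw [cast_succ_sub_one, extP_coe]; exact ih.1)⟩
    exact fun n => (hrsc2 n).1
  -- expansions of T(r n) and T(X * r n)
  have hTr : ∀ n, T (r n) = ∑ m ∈ Finset.range (n + 2),
      C (ipm σ (T (r n)) (r m)) * r m := by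
    intro n
    obtain ⟨c, hc⟩ := expansion r hdeg hlead (n + 1) (T (r n))
      (natDegree_T_le hII (le_of_eq (hnd n)))
    conv_lhs => rw [hc]
    refine Finset.sum_congr rfl fun m hm => ?_
    have : ipm σ (T (r n)) (r m) = c m := by
      rw [hc, ipm_expansion hmom r horth, if_pos (Finset.mem_range.1 hm)]
    rw [this]
  have hcf0 : ∀ n m, n + 2 ≤ m → ipm σ (T (r n)) (r m) = 0 := by
    intro n m hm
    conv_lhs => rw [hTr n]
    rw [ipm_expansion hmom r horth, if_neg (by omega)]
  have hdXr : ∀ n, (X * r n).natDegree ≤ n + 1 := by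
    intro n
    calc (X * r n).natDegree ≤ X.natDegree + (r n).natDegree := Polynomial.natDegree_mul_le
      _ ≤ n + 1 := by rw [hnd, Polynomial.natDegree_X]; omega
  have hTXr : ∀ n, T (X * r n) = ∑ m ∈ Finset.range (n + 3),
      C (ipm σ (T (X * r n)) (r m)) * r m := by
    intro n
    obtain ⟨c, hc⟩ := expansion r hdeg hlead (n + 2) (T (X * r n))
      (natDegree_T_le hII (hdXr n))
    conv_lhs => rw [hc]
    refine Finset.sum_congr rfl fun m hm => ?_
    have : ipm σ (T (X * r n)) (r m) = c m := by
      rw [hc, ipm_expansion hmom r horth, if_pos (Finset.mem_range.1 hm)]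
    rw [this]
  have hMf0 : ∀ n m, n + 3 ≤ m → ipm σ (T (X * r n)) (r m) = 0 := by
    intro n m hm
    conv_lhs => rw [hTXr n]
    rw [ipm_expansion hmom r horth, if_neg (by omega)]
  -- realness and symmetry of the matrix entries
  have hMim : ∀ n m, (ipm σ (T (X * r n)) (r m)).im = 0 := by
    intro n m
    exact Complex.conj_eq_iff_im.1
      (ipm_real (T_selfConj hII (selfConj_X.mul (hrsc n))) (hrsc m))
  have hre : ∀ n m, (((ipm σ (T (X * r n)) (r m)).re : ℝ) : ℂ)
      = ipm σ (T (X * r n)) (r m) := by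
    intro n m
    exact Complex.ext (by simp) (by simp [hMim n m])
  have hMsymm : ∀ n m, ipm σ (T (X * r n)) (r m) = ipm σ (T (X * r m)) (r n) := by
    intro n m
    rw [hIII (r n) (r m), ipm_conj_symm]
    exact Complex.conj_eq_iff_im.2 (hMim m n)
  -- positivity of the γ entries
  have hgapos : ∀ n, 0 < (ipm σ (T (X * r n)) (r (n + 2))).re := by
    intro n
    obtain ⟨ζ, hζpos, hζeq⟩ := exists_xi hII (n + 1)
    have hco : (T (X * r n)).coeff (n + 2) = (ζ : ℂ) * (r n).coeff n := by
      rw [hζeq _ (hdXr n), Polynomial.coeff_X_mul]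
    have hco2 : (T (X * r n)).coeff (n + 2)
        = ipm σ (T (X * r n)) (r (n + 2)) * (r (n + 2)).coeff (n + 2) := by
      conv_lhs => rw [hTXr n]
      rw [Polynomial.finset_sum_coeff]
      rw [Finset.sum_eq_single (n + 2)]
      · rw [Polynomial.coeff_C_mul]
      · intro m hm hne
        rw [Polynomial.coeff_C_mul,
          Polynomial.coeff_eq_zero_of_natDegree_lt (by
            rw [hnd]; simp only [Finset.mem_range] at hm; omega), mul_zero]
      · intro h; exact absurd (by simp : n + 2 ∈ Finset.range (n + 3)) h
    have heq := hco2.symm.trans hco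
    have hL := hlead (n + 2)
    have hL' := hlead n
    rw [Polynomial.leadingCoeff, hnd] at hL hL'
    have him := hMim n (n + 2)
    have hre2 := congrArg Complex.re heq
    simp only [Complex.mul_re, him, Complex.ofReal_re, Complex.ofReal_im, zero_mul,
      sub_zero, zero_sub] at hre2
    nlinarith [hL.1, hL'.1, hre2, hζpos]
  -- the operator A
  have hvsupp : ∀ n : ℕ, ∀ m : ℕ, ipm σ (T (r n)) (r m) ≠ 0 → m ∈ Finset.range (n + 2) := by
    intro n m h
    refine Finset.mem_range.2 ?_
    by_contra hc
    exact h (hcf0 n m (by omega))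
  let vv : ℕ → (ℕ →₀ ℂ) := fun n =>
    Finsupp.onFinset (Finset.range (n + 2)) (fun m => ipm σ (T (r n)) (r m)) (hvsupp n)
  have hv : ∀ n m, vv n m = ipm σ (T (r n)) (r m) := fun n m => rfl
  let A : Module.End ℂ (ℕ →₀ ℂ) :=
    Finsupp.lsum ℂ (fun n => LinearMap.toSpanSingleton ℂ (ℕ →₀ ℂ) (vv n))
  have hAe : ∀ n, A (e n) = vv n := by
    intro n
    show Finsupp.lsum ℂ (fun n => LinearMap.toSpanSingleton ℂ (ℕ →₀ ℂ) (vv n))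
      (Finsupp.single n 1) = vv n
    rw [Finsupp.lsum_single, LinearMap.toSpanSingleton_apply, one_smul]
  -- the constants α, β from T(r 0)
  obtain ⟨ξ, hξ1pos, hξeq⟩ := hII 0
  have hXr0 : X * r 0 = C ((b 0 : ℝ) : ℂ) * r 0 + C ((a 0 : ℝ) : ℂ) * r 1 := by
    have h := hrec 0
    have h1 : ((0 : ℕ) : ℤ) - 1 = -1 := by norm_num
    rw [h1] at h
    have h2 : extZ a (-1) = 0 := by norm_num [extZ]
    rw [h2] at h
    simpa using h
  have hr0C : r 0 = C ((r 0).coeff 0) :=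
    Polynomial.eq_C_of_natDegree_le_zero (le_of_eq (hnd 0))
  have hTr0 : T (r 0) = C ((ξ 0 + ξ 1 * b 0 : ℝ) : ℂ) * r 0
      + C ((ξ 1 * a 0 : ℝ) : ℂ) * r 1 := by
    have e1 : T (r 0) = C ((r 0).coeff 0) * T (X ^ 0) := by
      conv_lhs => rw [show r 0 = C ((r 0).coeff 0) * X ^ 0 by
        rw [pow_zero, mul_one]; exact hr0C]
      exact hTC _ _
    rw [e1, hξeq, Finset.sum_range_succ, Finset.sum_range_one, ← hr0C]
    push_cast
    simp only [map_add, map_mul]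
    linear_combination (Polynomial.C ((ξ 1 : ℝ) : ℂ)) * hXr0
  have hcf0m : ∀ m, ipm σ (T (r 0)) (r m)
      = ((ξ 0 + ξ 1 * b 0 : ℝ) : ℂ) * (if 0 = m then 1 else 0)
        + ((ξ 1 * a 0 : ℝ) : ℂ) * (if 1 = m then 1 else 0) := by
    intro m
    rw [hTr0, ipm_add_left hmom, ipm_Cmul_left, ipm_Cmul_left, horth 0 m, horth 1 m]
  have hξa : ξ 1 * a 0 ≠ 0 := ne_of_gt (mul_pos hξ1pos (hapos 0))
  -- three-term recurrence at n+1, cast-normalized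
  have hXrS : ∀ k : ℕ, X * r (k + 1) = C ((a k : ℝ) : ℂ) * r k
      + C ((b (k + 1) : ℝ) : ℂ) * r (k + 1) + C ((a (k + 1) : ℝ) : ℂ) * r (k + 2) := by
    intro k
    have h := hrec (k + 1)
    rwa [cast_succ_sub_one, extZ_coe, extP_coe] at h
  -- assemble
  let Θ : JacobiPencil := ⟨a, b,
    (fun n => (ipm σ (T (X * r n)) (r n)).re),
    (fun n => (ipm σ (T (X * r n)) (r (n + 1))).re),
    (fun n => (ipm σ (T (X * r n)) (r (n + 2))).re),
    (ξ 1 * a 0)⁻¹, -(ξ 0 + ξ 1 * b 0) / (ξ 1 * a 0),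
    hapos, hgapos, inv_pos.2 (mul_pos hξ1pos (hapos 0))⟩
  refine ⟨Θ, rfl, rfl, A, ⟨?_, ?_⟩, ?_⟩
  · -- A e₀ = α⁻¹ (e₁ - β e₀)
    show A (e 0) = ((((ξ 1 * a 0)⁻¹ : ℝ) : ℂ))⁻¹
      • (e 1 - ((-(ξ 0 + ξ 1 * b 0) / (ξ 1 * a 0) : ℝ) : ℂ) • e 0)
    rw [hAe 0]
    refine Finsupp.ext fun m => ?_
    rw [hv 0 m, hcf0m m, Finsupp.smul_apply, Finsupp.sub_apply, Finsupp.smul_apply,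
      e_apply, e_apply, smul_eq_mul, smul_eq_mul]
    push_cast
    rw [inv_inv]
    have hz1 : ((ξ 1 : ℝ) : ℂ) ≠ 0 := by
      simp only [ne_eq, Complex.ofReal_eq_zero]
      exact ne_of_gt hξ1pos
    have hz2 : ((a 0 : ℝ) : ℂ) ≠ 0 := by
      simp only [ne_eq, Complex.ofReal_eq_zero]
      exact ne_of_gt (hapos 0)
    by_cases h0 : m = 0
    · subst h0
      rw [if_pos rfl, if_neg (by omega)]
      push_cast
      field_simp
      try ring
    · by_cases h1 : m = 1
      · subst h1
        rw [if_pos rfl, if_neg (by omega)]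
        push_cast
        field_simp
        ring
      · rw [if_neg (by omega), if_neg (by omega)]
        push_cast
        ring
  · -- A (J₃ eₙ) = J₅ eₙ
    intro n
    have hJ5 : ∀ n m : ℕ, (J5col Θ n) m = ipm σ (T (X * r n)) (r m) :=
      J5_coord Θ (fun n m => ipm σ (T (X * r n)) (r m))
        (fun n => hre n n) (fun n => hre n (n + 1)) (fun n => hre n (n + 2))
        hMsymm hMf0
    refine Finsupp.ext fun m => ?_
    rw [hJ5 n m]
    have hJ3 : J3col Θ n
        = ((extZ a ((n : ℤ) - 1) : ℝ) : ℂ) • eZ ((n : ℤ) - 1)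
          + ((b n : ℝ) : ℂ) • e n + ((a n : ℝ) : ℂ) • e (n + 1) := rfl
    rw [hJ3, map_add, map_add, A.map_smul, A.map_smul, A.map_smul, hAe, hAe,
      Finsupp.add_apply, Finsupp.add_apply, Finsupp.smul_apply, Finsupp.smul_apply,
      Finsupp.smul_apply, smul_eq_mul, smul_eq_mul, smul_eq_mul]
    cases n with
    | zero =>
        have h1 : ((0 : ℕ) : ℤ) - 1 = -1 := by norm_num
        rw [h1]
        have h2 : extZ a (-1) = 0 := by norm_num [extZ]
        rw [h2]
        rw [hXr0, map_add, ipm_add_left hmom, hTC, hTC, ipm_Cmul_left, ipm_Cmul_left,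
          hv 0 m, hv 1 m]
        push_cast
        ring
    | succ k =>
        rw [cast_succ_sub_one, extZ_coe, eZ_coe, hAe k, hv k m, hv (k + 1) m, hv (k + 2) m]
        rw [hXrS k, map_add, map_add, ipm_add_left hmom, ipm_add_left hmom,
          hTC, hTC, hTC, ipm_Cmul_left, ipm_Cmul_left, ipm_Cmul_left]
        try push_cast
        try ring
  · -- model representation
    intro n
    rw [hAe n]
    rw [Finsupp.sum_of_support_subset _ (Finsupp.support_onFinset_subset) _
      (fun i _ => zero_smul ℂ (r i))]
    conv_lhs => rw [hTr n]
    refine Finset.sum_congr rfl fun m hm => ?_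
    rw [hv n m, Polynomial.smul_eq_C_mul]
end
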